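/- Let G be an abelian lattice-ordered group with weak order unit and let e, f be complemented elements of G not in a maximal proper c-subgroup M. Then e ∧ f ∉ M. Consequently, with U_c(e) = {N ∈ Max_c(G) : e ∉ N}, we have U_c(e) ∩ U_c(f) = U_c(e ∧ f) for complemented e, f. -/

import Mathlib

variable {G : Type*} [Lattice G] [AddCommGroup G]
  [CovariantClass G G (· + ·) (· ≤ ·)]

/-- The polar of a subset `S` of a lattice-ordered group. -/
def polar (S : Set G) : Set G := {h : G | ∀ g ∈ S, |h| ⊓ |g| = 0}

/-- A convex ℓ-subgroup: a subgroup closed under the lattice operations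
which is convex. -/
def IsConvexLSubgroup (H : Set G) : Prop :=
  (0 : G) ∈ H ∧ (∀ a ∈ H, ∀ b ∈ H, a + b ∈ H) ∧ (∀ a ∈ H, -a ∈ H) ∧
  (∀ a ∈ H, ∀ b ∈ H, a ⊔ b ∈ H) ∧ (∀ a ∈ H, ∀ b ∈ H, a ⊓ b ∈ H) ∧
  (∀ a b : G, 0 ≤ a → a ≤ b → b ∈ H → a ∈ H)

/-- A weak order unit: a positive element with trivial polar. -/
def IsWeakUnit (w : G) : Prop := 0 ≤ w ∧ ∀ x : G, |x| ⊓ w = 0 → x = 0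

/-- A d-subgroup: a convex ℓ-subgroup closed under double polars. -/
def IsDSubgroup (H : Set G) : Prop :=
  IsConvexLSubgroup H ∧ ∀ h ∈ H, polar (polar {h}) ⊆ H

/-- A maximal d-subgroup: a convex ℓ-subgroup maximal with respect to
not containing any weak order unit. -/
def IsMaxD (M : Set G) : Prop :=
  IsConvexLSubgroup M ∧ (∀ w ∈ M, ¬ IsWeakUnit w) ∧
  ∀ H : Set G, IsConvexLSubgroup H → (∀ w ∈ H, ¬ IsWeakUnit w) → M ⊆ H → H = M

/-- A complemented element. -/
def IsComplementedElt (g : G) : Prop :=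
  0 ≤ g ∧ ∃ f : G, 0 ≤ f ∧ g ⊓ f = 0 ∧ IsWeakUnit (g ⊔ f)

/-- A c-subgroup: a convex ℓ-subgroup generated by its complemented elements,
equivalently every element is dominated in absolute value by a complemented
element of the subgroup. -/
def IsCSubgroup (H : Set G) : Prop :=
  IsConvexLSubgroup H ∧ ∀ h ∈ H, ∃ e ∈ H, IsComplementedElt e ∧ |h| ≤ e

/-- A maximal proper c-subgroup: a c-subgroup maximal with respect to
not containing any weak order unit. -/
def IsMaxC (N : Set G) : Prop :=
  IsCSubgroup N ∧ (∀ w ∈ N, ¬ IsWeakUnit w) ∧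
  ∀ H : Set G, IsCSubgroup H → (∀ w ∈ H, ¬ IsWeakUnit w) → N ⊆ H → H = N

/-- `Mc M`: the convex ℓ-subgroup generated by the complemented elements of `M`. -/
def Mc (M : Set G) : Set G :=
  ⋂₀ {H : Set G | IsConvexLSubgroup H ∧ {e ∈ M | IsComplementedElt e} ⊆ H}

/-- The basic set `U_c(e)` of maximal proper c-subgroups omitting `e`. -/
def Uc (e : G) : Set (Set G) := {N : Set G | IsMaxC N ∧ e ∉ N}


section UcInterAux

private lemma wu_mono {w w' : G} (h : IsWeakUnit w) (hle : w ≤ w') : IsWeakUnit w' := by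
  refine ⟨h.1.trans hle, fun x hx => h.2 x (le_antisymm ?_ ?_)⟩
  · calc |x| ⊓ w ≤ |x| ⊓ w' := inf_le_inf_left _ hle
      _ = 0 := hx
  · exact le_inf (abs_nonneg x) h.1

private lemma wu_inf {w₁ w₂ : G} (h₁ : IsWeakUnit w₁) (h₂ : IsWeakUnit w₂) :
    IsWeakUnit (w₁ ⊓ w₂) := by
  refine ⟨le_inf h₁.1 h₂.1, fun x hx => ?_⟩
  have hy : (0:G) ≤ |x| ⊓ w₁ := le_inf (abs_nonneg x) h₁.1
  have h0 : |(|x| ⊓ w₁)| ⊓ w₂ = 0 := by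
    rw [abs_of_nonneg hy, inf_assoc]
    exact hx
  have := h₂.2 _ h0
  exact h₁.2 x this

private lemma riesz {a b c : G} (ha : 0 ≤ a) (hb : 0 ≤ b) (hc : 0 ≤ c) :
    a ⊓ (b + c) ≤ a ⊓ b + a ⊓ c := by
  have h1 : a ⊓ b + a ⊓ c = ((a + a) ⊓ (a + c)) ⊓ ((b + a) ⊓ (b + c)) := by
    rw [inf_add, add_inf, add_inf]
  rw [h1]
  refine le_inf (le_inf ?_ ?_) (le_inf ?_ ?_)
  · exact inf_le_left.trans (le_add_of_nonneg_right ha)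
  · exact inf_le_left.trans (le_add_of_nonneg_right hc)
  · exact inf_le_left.trans (le_add_of_nonneg_left hb)
  · exact inf_le_right

private lemma inf_nsmul_le {a b : G} (ha : 0 ≤ a) (hb : 0 ≤ b) :
    ∀ n : ℕ, a ⊓ (n • b) ≤ n • (a ⊓ b)
  | 0 => by simp
  | (n+1) => by
    calc a ⊓ ((n+1) • b) = a ⊓ (n • b + b) := by rw [succ_nsmul]
      _ ≤ a ⊓ (n • b) + a ⊓ b := riesz ha (nsmul_nonneg hb n) hb
      _ ≤ n • (a ⊓ b) + a ⊓ b := add_le_add_left (inf_nsmul_le ha hb n) _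
      _ = (n+1) • (a ⊓ b) := (succ_nsmul _ n).symm

private lemma nsmul_disj {a b : G} (ha : 0 ≤ a) (hb : 0 ≤ b) (h : a ⊓ b = 0) (n : ℕ) :
    (n • a) ⊓ b = 0 := by
  refine le_antisymm ?_ (le_inf (nsmul_nonneg ha n) hb)
  calc (n • a) ⊓ b = b ⊓ (n • a) := inf_comm _ _
    _ ≤ n • (b ⊓ a) := inf_nsmul_le hb ha n
    _ = 0 := by rw [inf_comm, h, smul_zero]

private lemma four_bound (a a' b b' : G) :
    (a ⊔ a') ⊓ (b ⊔ b') ≤ ((a ⊓ b) ⊔ (a' ⊓ b)) ⊔ ((a ⊓ b') ⊔ (a' ⊓ b')) := by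
  letI : DistribLattice G := AddCommGroup.toDistribLattice G
  exact le_of_eq (by rw [inf_sup_left, inf_sup_right, inf_sup_right])

private lemma sup_unit {a a' b b' : G} (hwa : IsWeakUnit (a ⊔ a'))
    (hwb : IsWeakUnit (b ⊔ b')) : IsWeakUnit ((a ⊔ b) ⊔ (a' ⊓ b')) := by
  apply wu_mono (wu_inf hwa hwb)
  refine (four_bound a a' b b').trans ?_
  refine sup_le (sup_le ?_ ?_) (sup_le ?_ ?_)
  · exact le_sup_of_le_left (le_sup_of_le_left inf_le_left)
  · exact le_sup_of_le_left (le_sup_of_le_right inf_le_right)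
  · exact le_sup_of_le_left (le_sup_of_le_left inf_le_left)
  · exact le_sup_right

private lemma complElt_zero (u : G) (hu : IsWeakUnit u) : IsComplementedElt (0:G) :=
  ⟨le_refl 0, u, hu.1, inf_eq_left.2 hu.1, by rwa [sup_eq_right.2 hu.1]⟩

private lemma complElt_sup {a b : G} (ha : IsComplementedElt a) (hb : IsComplementedElt b) :
    IsComplementedElt (a ⊔ b) := by
  obtain ⟨ha0, a', ha'0, haa', hwa⟩ := ha
  obtain ⟨hb0, b', hb'0, hbb', hwb⟩ := hb
  refine ⟨le_sup_of_le_left ha0, a' ⊓ b', le_inf ha'0 hb'0, ?_, sup_unit hwa hwb⟩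
  refine le_antisymm ?_ (le_inf (le_sup_of_le_left ha0) (le_inf ha'0 hb'0))
  calc (a ⊔ b) ⊓ (a' ⊓ b') = (a' ⊓ b') ⊓ (a ⊔ b) := inf_comm _ _
    _ ≤ (a' ⊓ b') ⊓ (a + b) := inf_le_inf_left _
        (sup_le (le_add_of_nonneg_right hb0) (le_add_of_nonneg_left ha0))
    _ ≤ (a' ⊓ b') ⊓ a + (a' ⊓ b') ⊓ b := riesz (le_inf ha'0 hb'0) ha0 hb0
    _ ≤ a' ⊓ a + b' ⊓ b := add_le_add
        (le_inf (inf_le_left.trans inf_le_left) inf_le_right)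
        (le_inf (inf_le_left.trans inf_le_right) inf_le_right)
    _ = 0 := by rw [inf_comm a' a, haa', inf_comm b' b, hbb', add_zero]

private lemma complElt_add {a b : G} (ha : IsComplementedElt a) (hb : IsComplementedElt b) :
    IsComplementedElt (a + b) := by
  obtain ⟨ha0, a', ha'0, haa', hwa⟩ := ha
  obtain ⟨hb0, b', hb'0, hbb', hwb⟩ := hb
  refine ⟨add_nonneg ha0 hb0, a' ⊓ b', le_inf ha'0 hb'0, ?_, ?_⟩
  · refine le_antisymm ?_ (le_inf (add_nonneg ha0 hb0) (le_inf ha'0 hb'0))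
    calc (a + b) ⊓ (a' ⊓ b') = (a' ⊓ b') ⊓ (a + b) := inf_comm _ _
      _ ≤ (a' ⊓ b') ⊓ a + (a' ⊓ b') ⊓ b := riesz (le_inf ha'0 hb'0) ha0 hb0
      _ ≤ a' ⊓ a + b' ⊓ b := add_le_add
          (le_inf (inf_le_left.trans inf_le_left) inf_le_right)
          (le_inf (inf_le_left.trans inf_le_right) inf_le_right)
      _ = 0 := by rw [inf_comm a' a, haa', inf_comm b' b, hbb', add_zero]
  · apply wu_mono (sup_unit hwa hwb)
    exact sup_le_sup_right
      (sup_le (le_add_of_nonneg_right hb0) (le_add_of_nonneg_left ha0)) _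

private lemma complElt_inf {a b : G} (ha : IsComplementedElt a) (hb : IsComplementedElt b) :
    IsComplementedElt (a ⊓ b) := by
  obtain ⟨ha0, a', ha'0, haa', hwa⟩ := ha
  obtain ⟨hb0, b', hb'0, hbb', hwb⟩ := hb
  refine ⟨le_inf ha0 hb0, a' ⊔ b', le_sup_of_le_left ha'0, ?_, ?_⟩
  · refine le_antisymm ?_ (le_inf (le_inf ha0 hb0) (le_sup_of_le_left ha'0))
    calc (a ⊓ b) ⊓ (a' ⊔ b') ≤ (a ⊓ b) ⊓ (a' + b') := inf_le_inf_left _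
          (sup_le (le_add_of_nonneg_right hb'0) (le_add_of_nonneg_left ha'0))
      _ ≤ (a ⊓ b) ⊓ a' + (a ⊓ b) ⊓ b' := riesz (le_inf ha0 hb0) ha'0 hb'0
      _ ≤ a ⊓ a' + b ⊓ b' := add_le_add
          (le_inf (inf_le_left.trans inf_le_left) inf_le_right)
          (le_inf (inf_le_left.trans inf_le_right) inf_le_right)
      _ = 0 := by rw [haa', hbb', add_zero]
  · apply wu_mono (wu_inf hwa hwb)
    refine (four_bound a a' b b').trans ?_
    refine sup_le (sup_le ?_ ?_) (sup_le ?_ ?_)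
    · exact le_sup_left
    · exact le_sup_of_le_right (le_sup_of_le_left inf_le_left)
    · exact le_sup_of_le_right (le_sup_of_le_right inf_le_right)
    · exact le_sup_of_le_right (le_sup_of_le_left inf_le_left)

private lemma complElt_nsmul {a : G} (ha : IsComplementedElt a) (n : ℕ) :
    IsComplementedElt ((n+1) • a) := by
  obtain ⟨ha0, a', ha'0, haa', hwa⟩ := ha
  refine ⟨nsmul_nonneg ha0 _, a', ha'0, nsmul_disj ha0 ha'0 haa' _, ?_⟩
  apply wu_mono hwa
  refine sup_le_sup_right ?_ _
  calc a = 0 + a := (zero_add a).symm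
    _ ≤ n • a + a := add_le_add_left (nsmul_nonneg ha0 n) a
    _ = (n+1) • a := (succ_nsmul a n).symm

private lemma cls_nsmul {H : Set G} (hH : IsConvexLSubgroup H) {a : G} (haH : a ∈ H) :
    ∀ n : ℕ, n • a ∈ H
  | 0 => by rw [zero_nsmul]; exact hH.1
  | (n+1) => by
    rw [succ_nsmul]
    exact hH.2.1 _ (cls_nsmul hH haH n) _ haH

private lemma myabs_sup_le (a b : G) : |a ⊔ b| ≤ |a| + |b| := by
  rw [abs_le']
  constructor
  · exact sup_le ((le_abs_self a).trans (le_add_of_nonneg_right (abs_nonneg b)))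
      ((le_abs_self b).trans (le_add_of_nonneg_left (abs_nonneg a)))
  · rw [neg_sup]
    exact inf_le_left.trans
      ((neg_le_abs a).trans (le_add_of_nonneg_right (abs_nonneg b)))

private lemma myabs_inf_le (a b : G) : |a ⊓ b| ≤ |a| + |b| := by
  rw [abs_le']
  constructor
  · exact inf_le_left.trans ((le_abs_self a).trans (le_add_of_nonneg_right (abs_nonneg b)))
  · rw [neg_inf]
    exact sup_le ((neg_le_abs a).trans (le_add_of_nonneg_right (abs_nonneg b)))
      ((neg_le_abs b).trans (le_add_of_nonneg_left (abs_nonneg a)))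

private lemma exists_unit_le (u : G) (hu : IsWeakUnit u) {M : Set G} (hM : IsMaxC M)
    {e : G} (he : IsComplementedElt e) (heM : e ∉ M) :
    ∃ w m, IsWeakUnit w ∧ m ∈ M ∧ IsComplementedElt m ∧ ∃ n : ℕ, w ≤ m + n • e := by
  obtain ⟨⟨hMconv, hMgen⟩, hMnu, hMmax⟩ := hM
  set H : Set G :=
    {x | ∃ m, (m ∈ M ∧ IsComplementedElt m) ∧ ∃ n : ℕ, |x| ≤ m + n • e} with hHdef
  have hbound : ∀ {m₁ m₂ : G} {n₁ n₂ : ℕ}, IsComplementedElt m₁ → IsComplementedElt m₂ →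
      (m₁ + n₁ • e) + (m₂ + n₂ • e) = (m₁ + m₂) + (n₁ + n₂) • e := by
    intro m₁ m₂ n₁ n₂ _ _
    rw [add_nsmul]
    abel
  have haddH : ∀ a ∈ H, ∀ b ∈ H, a + b ∈ H := by
    rintro a ⟨m₁, ⟨hm₁M, hm₁c⟩, n₁, hb₁⟩ b ⟨m₂, ⟨hm₂M, hm₂c⟩, n₂, hb₂⟩
    refine ⟨m₁ + m₂, ⟨hMconv.2.1 _ hm₁M _ hm₂M, complElt_add hm₁c hm₂c⟩, n₁ + n₂, ?_⟩
    calc |a + b| ≤ |a| + |b| := abs_add_le a b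
      _ ≤ (m₁ + n₁ • e) + (m₂ + n₂ • e) := add_le_add hb₁ hb₂
      _ = (m₁ + m₂) + (n₁ + n₂) • e := hbound hm₁c hm₂c
  have hlatH : ∀ a ∈ H, ∀ b ∈ H, (|a ⊔ b| ≤ |a| + |b|) → (a ⊔ b) ∈ H := by
    rintro a ⟨m₁, ⟨hm₁M, hm₁c⟩, n₁, hb₁⟩ b ⟨m₂, ⟨hm₂M, hm₂c⟩, n₂, hb₂⟩ habs
    refine ⟨m₁ + m₂, ⟨hMconv.2.1 _ hm₁M _ hm₂M, complElt_add hm₁c hm₂c⟩, n₁ + n₂, ?_⟩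
    calc |a ⊔ b| ≤ |a| + |b| := habs
      _ ≤ (m₁ + n₁ • e) + (m₂ + n₂ • e) := add_le_add hb₁ hb₂
      _ = (m₁ + m₂) + (n₁ + n₂) • e := hbound hm₁c hm₂c
  have hconv : IsConvexLSubgroup H := by
    refine ⟨⟨0, ⟨hMconv.1, complElt_zero u hu⟩, 0, by simp⟩, haddH, ?_, ?_, ?_, ?_⟩
    · rintro a ⟨m, hm, n, hb⟩
      exact ⟨m, hm, n, by rwa [abs_neg]⟩
    · intro a ha b hb
      exact hlatH a ha b hb (myabs_sup_le a b)
    · rintro a ha b hb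
      obtain ⟨m₁, ⟨hm₁M, hm₁c⟩, n₁, hb₁⟩ := ha
      obtain ⟨m₂, ⟨hm₂M, hm₂c⟩, n₂, hb₂⟩ := hb
      refine ⟨m₁ + m₂, ⟨hMconv.2.1 _ hm₁M _ hm₂M, complElt_add hm₁c hm₂c⟩, n₁ + n₂, ?_⟩
      calc |a ⊓ b| ≤ |a| + |b| := myabs_inf_le a b
        _ ≤ (m₁ + n₁ • e) + (m₂ + n₂ • e) := add_le_add hb₁ hb₂
        _ = (m₁ + m₂) + (n₁ + n₂) • e := hbound hm₁c hm₂c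
    · rintro a b ha0 hab ⟨m, hm, n, hb⟩
      refine ⟨m, hm, n, ?_⟩
      calc |a| = a := abs_of_nonneg ha0
        _ ≤ b := hab
        _ ≤ |b| := le_abs_self b
        _ ≤ m + n • e := hb
  have hcsub : IsCSubgroup H := by
    refine ⟨hconv, ?_⟩
    rintro h ⟨m, ⟨hmM, hmc⟩, n, hb⟩
    have hm0 : 0 ≤ m := hmc.1
    have hme0 : (0:G) ≤ m ⊔ e := le_sup_of_le_left hm0
    refine ⟨(n+1) • (m ⊔ e), ?_, complElt_nsmul (complElt_sup hmc he) n, ?_⟩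
    · refine ⟨(n+1) • m, ⟨cls_nsmul hMconv hmM (n+1), complElt_nsmul hmc n⟩, n+1, ?_⟩
      rw [abs_of_nonneg (nsmul_nonneg hme0 (n+1))]
      calc (n+1) • (m ⊔ e) ≤ (n+1) • (m + e) := nsmul_le_nsmul_right
            (sup_le (le_add_of_nonneg_right he.1) (le_add_of_nonneg_left hm0)) (n+1)
        _ = (n+1) • m + (n+1) • e := nsmul_add m e (n+1)
    · calc |h| ≤ m + n • e := hb
        _ ≤ (m ⊔ e) + n • (m ⊔ e) := add_le_add le_sup_left
            (nsmul_le_nsmul_right le_sup_right n)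
        _ = (n+1) • (m ⊔ e) := by rw [succ_nsmul, add_comm]
  have hMH : M ⊆ H := by
    intro x hx
    obtain ⟨e₀, he₀M, he₀c, hxe₀⟩ := hMgen x hx
    exact ⟨e₀, ⟨he₀M, he₀c⟩, 0, by simpa using hxe₀⟩
  have heH : e ∈ H := ⟨0, ⟨hMconv.1, complElt_zero u hu⟩, 1, by
    rw [abs_of_nonneg he.1]; simp⟩
  have hex : ∃ w ∈ H, IsWeakUnit w := by
    by_contra hno
    push_neg at hno
    have := hMmax H hcsub (fun w hw hwu => hno w hw hwu) hMH
    exact heM (this ▸ heH)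
  obtain ⟨w, hwH, hwu⟩ := hex
  obtain ⟨m, ⟨hmM, hmc⟩, n, hb⟩ := hwH
  exact ⟨w, m, hwu, hmM, hmc, n, (le_abs_self w).trans hb⟩

end UcInterAux

/-- if complemented `e, f` both lie outside a maximal proper
c-subgroup `M`, then so does `e ∧ f`; consequently
`U_c(e) ∩ U_c(f) = U_c(e ∧ f)` for complemented `e, f`. -/
theorem Uc_inter (u : G) (hu : IsWeakUnit u)
    (e f : G) (he : IsComplementedElt e) (hf : IsComplementedElt f) :
    (∀ M : Set G, IsMaxC M → e ∉ M → f ∉ M → e ⊓ f ∉ M) ∧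
    Uc e ∩ Uc f = Uc (e ⊓ f) := by
  have main : ∀ M : Set G, IsMaxC M → e ∉ M → f ∉ M → e ⊓ f ∉ M := by
    intro M hM heM hfM hefM
    obtain ⟨w₁, m₁, hw₁, hm₁M, hm₁c, n₁, hb₁⟩ := exists_unit_le u hu hM he heM
    obtain ⟨w₂, m₂, hw₂, hm₂M, hm₂c, n₂, hb₂⟩ := exists_unit_le u hu hM hf hfM
    have hconv : IsConvexLSubgroup M := hM.1.1
    have hA : (0:G) ≤ m₁ := hm₁c.1
    have hC : (0:G) ≤ m₂ := hm₂c.1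
    have hB : (0:G) ≤ n₁ • e := nsmul_nonneg he.1 n₁
    have hD : (0:G) ≤ n₂ • f := nsmul_nonneg hf.1 n₂
    set w := w₁ ⊓ w₂ with hwdef
    have hw : IsWeakUnit w := wu_inf hw₁ hw₂
    -- the four pieces
    have ht1 : m₁ ⊓ m₂ ∈ M := hconv.2.2.2.2.1 _ hm₁M _ hm₂M
    have ht2 : m₁ ⊓ (n₂ • f) ∈ M :=
      hconv.2.2.2.2.2 _ _ (le_inf hA hD) inf_le_left hm₁M
    have ht3 : (n₁ • e) ⊓ m₂ ∈ M :=
      hconv.2.2.2.2.2 _ _ (le_inf hB hC) inf_le_right hm₂M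
    have ht4 : (n₁ • e) ⊓ (n₂ • f) ∈ M := by
      have hle : (n₁ • e) ⊓ (n₂ • f) ≤ n₂ • (n₁ • (f ⊓ e)) := by
        calc (n₁ • e) ⊓ (n₂ • f) ≤ n₂ • ((n₁ • e) ⊓ f) := inf_nsmul_le hB hf.1 n₂
          _ = n₂ • (f ⊓ (n₁ • e)) := by rw [inf_comm]
          _ ≤ n₂ • (n₁ • (f ⊓ e)) := nsmul_le_nsmul_right (inf_nsmul_le hf.1 he.1 n₁) n₂
      have hmem : n₂ • (n₁ • (f ⊓ e)) ∈ M := by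
        have : f ⊓ e ∈ M := by rwa [inf_comm]
        exact cls_nsmul hconv (cls_nsmul hconv this n₁) n₂
      exact hconv.2.2.2.2.2 _ _ (le_inf hB hD) hle hmem
    have hS : (m₁ ⊓ m₂ + m₁ ⊓ (n₂ • f)) + ((n₁ • e) ⊓ m₂ + (n₁ • e) ⊓ (n₂ • f)) ∈ M :=
      hconv.2.1 _ (hconv.2.1 _ ht1 _ ht2) _ (hconv.2.1 _ ht3 _ ht4)
    have hwle : w ≤ (m₁ ⊓ m₂ + m₁ ⊓ (n₂ • f)) + ((n₁ • e) ⊓ m₂ + (n₁ • e) ⊓ (n₂ • f)) := by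
      have h1 : w ≤ (m₁ + n₁ • e) ⊓ (m₂ + n₂ • f) :=
        le_inf (inf_le_left.trans hb₁) (inf_le_right.trans hb₂)
      have h2 : (m₁ + n₁ • e) ⊓ (m₂ + n₂ • f)
          ≤ m₁ ⊓ (m₂ + n₂ • f) + (n₁ • e) ⊓ (m₂ + n₂ • f) := by
        rw [inf_comm (m₁ + n₁ • e) (m₂ + n₂ • f)] at *
        calc (m₂ + n₂ • f) ⊓ (m₁ + n₁ • e)
            ≤ (m₂ + n₂ • f) ⊓ m₁ + (m₂ + n₂ • f) ⊓ (n₁ • e) :=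
              riesz (add_nonneg hC hD) hA hB
          _ = m₁ ⊓ (m₂ + n₂ • f) + (n₁ • e) ⊓ (m₂ + n₂ • f) := by
              rw [inf_comm (m₂ + n₂ • f) m₁, inf_comm (m₂ + n₂ • f) (n₁ • e)]
      have h3 : m₁ ⊓ (m₂ + n₂ • f) ≤ m₁ ⊓ m₂ + m₁ ⊓ (n₂ • f) := riesz hA hC hD
      have h4 : (n₁ • e) ⊓ (m₂ + n₂ • f) ≤ (n₁ • e) ⊓ m₂ + (n₁ • e) ⊓ (n₂ • f) :=
        riesz hB hC hD
      exact h1.trans (h2.trans (add_le_add h3 h4))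
    have hwM : w ∈ M := hconv.2.2.2.2.2 _ _ hw.1 hwle hS
    exact hM.2.1 w hwM hw
  refine ⟨main, ?_⟩
  ext N
  simp only [Set.mem_inter_iff, Uc, Set.mem_setOf_eq]
  constructor
  · rintro ⟨⟨hN, heN⟩, ⟨-, hfN⟩⟩
    exact ⟨hN, main N hN heN hfN⟩
  · rintro ⟨hN, hefN⟩
    have hconv : IsConvexLSubgroup N := hN.1.1
    refine ⟨⟨hN, fun heN => hefN ?_⟩, ⟨hN, fun hfN => hefN ?_⟩⟩
    · exact hconv.2.2.2.2.2 _ _ (le_inf he.1 hf.1) inf_le_left heN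
    · exact hconv.2.2.2.2.2 _ _ (le_inf he.1 hf.1) inf_le_right hfN
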